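/- For every positive integer n, tree-α(L(K_n)) = α(L(K_n)) = ⌊n/2⌋, where K_n is the complete graph on n vertices. -/

import Mathlib

/-
Common definitions: tree decompositions, tree-independence number, treewidth,
independence/clique numbers, induced-subgraph freeness, and the special graphs
appearing in the paper "Treewidth versus clique number: induced minors,
distance to block graphs ... (tree-independence number)".
-/

namespace PaperTIN

open SimpleGraph

variable {V W : Type}

/-- A set of vertices is independent if no two of its members are adjacent. -/
def IsIndepSet (G : SimpleGraph V) (s : Set V) : Prop :=
  s.Pairwise fun u v => ¬ G.Adj u v

/-- The maximum size of an independent set of `G` contained in `s`,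
i.e. the independence number `α(G[s])` of the induced subgraph `G[s]`. -/
noncomputable def indepNumOn (G : SimpleGraph V) (s : Set V) : ℕ :=
  sSup {n | ∃ t : Finset V, ↑t ⊆ s ∧ IsIndepSet G ↑t ∧ t.card = n}

/-- The independence number `α(G)`. -/
noncomputable def indepNum (G : SimpleGraph V) : ℕ :=
  indepNumOn G Set.univ

/-- The maximum size of a clique of `G` contained in `s`,
i.e. the clique number `ω(G[s])` of the induced subgraph `G[s]`. -/
noncomputable def cliqueNumOn (G : SimpleGraph V) (s : Set V) : ℕ :=
  sSup {n | ∃ t : Finset V, ↑t ⊆ s ∧ G.IsClique ↑t ∧ t.card = n}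

/-- A tree decomposition of a graph `G`: a tree together with a bag for each node,
such that every vertex is in some bag, both endpoints of every edge lie in a common
bag, and for every vertex the set of nodes whose bag contains it induces a connected
(hence nonempty) subtree of the tree. -/
structure TreeDecomp {V : Type} (G : SimpleGraph V) where
  ι : Type
  tree : SimpleGraph ι
  isTree : tree.IsTree
  bag : ι → Set V
  bag_vert : ∀ v : V, ∃ t : ι, v ∈ bag t
  bag_edge : ∀ ⦃u v : V⦄, G.Adj u v → ∃ t : ι, u ∈ bag t ∧ v ∈ bag t
  bag_conn : ∀ v : V, (tree.induce {t : ι | v ∈ bag t}).Connected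

/-- The independence number of a tree decomposition: the maximum, over all bags,
of the independence number of the subgraph induced by the bag. -/
noncomputable def TreeDecomp.alpha {G : SimpleGraph V} (D : TreeDecomp G) : ℕ :=
  sSup {n | ∃ t : D.ι, n = indepNumOn G (D.bag t)}

/-- The tree-independence number `tree-α(G)`: the minimum independence number of a
tree decomposition of `G`. -/
noncomputable def treeIndepNum (G : SimpleGraph V) : ℕ :=
  sInf {n | ∃ D : TreeDecomp G, D.alpha = n}

/-- The width of a tree decomposition: maximum bag size minus one. -/
noncomputable def TreeDecomp.width {G : SimpleGraph V} (D : TreeDecomp G) : ℕ :=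
  sSup {n | ∃ t : D.ι, n = (D.bag t).ncard} - 1

/-- The treewidth `tw(G)`: the minimum width of a tree decomposition of `G`. -/
noncomputable def treewidth (G : SimpleGraph V) : ℕ :=
  sInf {n | ∃ D : TreeDecomp G, D.width = n}

/-- `Free H G` means that `G` has no induced subgraph isomorphic to `H`
(equivalently, there is no graph embedding of `H` into `G`). -/
def Free (H : SimpleGraph W) (G : SimpleGraph V) : Prop :=
  IsEmpty (H ↪g G)

/-- The star `K_{1,d}` with `d` leaves. -/
def star (d : ℕ) : SimpleGraph (Fin 1 ⊕ Fin d) :=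
  completeBipartiteGraph (Fin 1) (Fin d)

/-- The complete bipartite graph `K_{m,n}`. -/
def biclique (m n : ℕ) : SimpleGraph (Fin m ⊕ Fin n) :=
  completeBipartiteGraph (Fin m) (Fin n)

/-- The open neighborhood `N(X)` of a set of vertices: all vertices having a neighbor in `X`. -/
def nbhdSet (G : SimpleGraph V) (X : Set V) : Set V :=
  {v | ∃ x ∈ X, G.Adj x v}

/-- The closed neighborhood `N[X]` of a set of vertices. -/
def closedNbhdSet (G : SimpleGraph V) (X : Set V) : Set V :=
  X ∪ nbhdSet G X

/-- `S_p`: the tree obtained from the claw `K_{1,3}` by subdividing each edge exactly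
`p-1` times; equivalently a spider with three legs, each a path on `p` vertices,
attached to a center vertex. -/
def spider (p : ℕ) : SimpleGraph (Unit ⊕ Fin 3 × Fin p) :=
  SimpleGraph.fromRel fun a b =>
    (∃ j : Fin 3, ∃ i : Fin p, a = Sum.inl () ∧ b = Sum.inr (j, i) ∧ (i : ℕ) = 0) ∨
    (∃ j : Fin 3, ∃ i i' : Fin p, a = Sum.inr (j, i) ∧ b = Sum.inr (j, i') ∧
      (i' : ℕ) = (i : ℕ) + 1)

/-- The disjoint union of `k` copies of a graph `H`. -/
def kCopies (k : ℕ) (H : SimpleGraph W) : SimpleGraph (Fin k × W) where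
  Adj a b := a.1 = b.1 ∧ H.Adj a.2 b.2
  symm := ⟨by rintro a b ⟨h1, h2⟩; exact ⟨h1.symm, h2.symm⟩⟩
  loopless := ⟨by rintro a ⟨-, h⟩; exact H.loopless.irrefl _ h⟩

/-- Membership in the family `𝒮`: every connected component is a tree with at most three
leaves. Equivalently, the graph is a forest and each connected component contains at most
three vertices of degree one. -/
def InS [Fintype W] (S : SimpleGraph W) : Prop :=
  S.IsAcyclic ∧ ∀ c : S.ConnectedComponent,
    {v : W | S.connectedComponentMk v = c ∧ (S.neighborSet v).ncard = 1}.ncard ≤ 3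

/-- Membership in the family `L(𝒮)`: the graph is isomorphic to the line graph of some
member of `𝒮`. -/
def InLS [Fintype V] (T : SimpleGraph V) : Prop :=
  ∃ (W : Type) (_ : Fintype W) (S : SimpleGraph W),
    InS S ∧ Nonempty (T ≃g S.lineGraph)

/-- The induced biclique number of `G`: the largest `n` such that `G` contains an
induced subgraph isomorphic to `K_{n,n}`. -/
noncomputable def ibn (G : SimpleGraph V) : ℕ :=
  sSup {n | Nonempty (completeBipartiteGraph (Fin n) (Fin n) ↪g G)}

/-- The `i`-th bag (0-indexed) of the `h`-backbone structure of an induced path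
`f : P_ℓ ↪g G`: the closed neighborhood of the set of vertices
`{v_i, …, v_{i+h-1}}` of the path. -/
def backboneBag (G : SimpleGraph V) {ℓ : ℕ} (f : pathGraph ℓ ↪g G) (h i : ℕ) : Set V :=
  closedNbhdSet G (⇑f '' {j : Fin ℓ | i ≤ (j : ℕ) ∧ (j : ℕ) ≤ i + h - 1})

/-- The vertex set (as a set of vertices of the ambient graph) of a connected component
of the induced subgraph `G[s]`. -/
def componentVerts {G : SimpleGraph V} {s : Set V}
    (C : (G.induce s).ConnectedComponent) : Set V :=
  Subtype.val '' {w : s | (G.induce s).connectedComponentMk w = C}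


/- ===== auxiliary development ===== -/


set_option linter.unusedSectionVars false

variable {ι : Type} {T : SimpleGraph ι}

lemma mem_of_support_map_induce {T : SimpleGraph ι} {s : Set ι} {x y : ↑s}
    (w : (T.induce s).Walk x y) :
    ∀ z ∈ (w.map (SimpleGraph.Embedding.induce s).toHom).support, z ∈ s := by
  intro z hz
  rw [SimpleGraph.Walk.support_map] at hz
  obtain ⟨u, _, rfl⟩ := List.mem_map.mp hz
  exact u.2

section TreeBasics

/-- The unique path between two vertices of a tree. -/
noncomputable def pth (hT : T.IsTree) (a b : ι) : T.Walk a b :=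
  (hT.existsUnique_path a b).choose

lemma pth_isPath (hT : T.IsTree) (a b : ι) : (pth hT a b).IsPath :=
  (hT.existsUnique_path a b).choose_spec.1

lemma pth_eq (hT : T.IsTree) {a b : ι} (w : T.Walk a b) (hw : w.IsPath) :
    pth hT a b = w :=
  ((hT.existsUnique_path a b).choose_spec.2 w hw).symm

lemma pth_nil (hT : T.IsTree) (a : ι) : pth hT a a = Walk.nil :=
  pth_eq hT Walk.nil (Walk.IsPath.nil)

/-- Lift a walk with support inside `s` to a reachability statement in the induced graph. -/
lemma reach_induce_of_walk {s : Set ι} :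
    ∀ {a b : ι} (w : T.Walk a b), (∀ x ∈ w.support, x ∈ s) →
      ∀ (ha : a ∈ s) (hb : b ∈ s), (T.induce s).Reachable ⟨a, ha⟩ ⟨b, hb⟩ := by
  intro a b w
  induction w with
  | nil => intro _ ha hb; exact Reachable.refl _
  | @cons a x b h w ih =>
    intro hsup ha hb
    have hx : x ∈ s := hsup x (by simp)
    have : (T.induce s).Adj ⟨a, ha⟩ ⟨x, hx⟩ := by
      simp only [comap_adj, Function.Embedding.coe_subtype]
      exact h
    exact (this.reachable).trans (ih (fun y hy => hsup y (by simp [hy])) hx hb)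

/-- From reachability in the induced graph on `{x | x ≠ t}`, the unique path avoids `t`. -/
lemma pth_avoids_of_reach (hT : T.IsTree) {t a b : ι} {ha : a ≠ t} {hb : b ≠ t}
    (h : (T.induce {x : ι | x ≠ t}).Reachable ⟨a, ha⟩ ⟨b, hb⟩) :
    t ∉ (pth hT a b).support := by
  classical
  obtain ⟨w⟩ := h
  have hbp : t ∉ (w.map (SimpleGraph.Embedding.induce {x : ι | x ≠ t}).toHom).bypass.support :=
    fun h => (mem_of_support_map_induce w t (Walk.support_bypass_subset _ h)) rfl
  have heq : pth hT a b = (w.map (SimpleGraph.Embedding.induce {x : ι | x ≠ t}).toHom).bypass :=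
    pth_eq hT _ ((w.map (SimpleGraph.Embedding.induce {x : ι | x ≠ t}).toHom).bypass_isPath)
  rwa [heq]

lemma reach_of_pth_avoids (hT : T.IsTree) {t a b : ι} (h : t ∉ (pth hT a b).support) :
    ∀ (ha : a ≠ t) (hb : b ≠ t),
      (T.induce {x : ι | x ≠ t}).Reachable ⟨a, ha⟩ ⟨b, hb⟩ := by
  intro ha hb
  exact reach_induce_of_walk (pth hT a b)
    (fun x hx => (show x ≠ t from fun hxt => h (by rwa [hxt] at hx))) ha hb

/-- `a` is distinct from `t` whenever the path from `a` to `b` avoids `t`. -/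
lemma ne_of_pth_avoids_left (hT : T.IsTree) {t a b : ι} (h : t ∉ (pth hT a b).support) :
    a ≠ t := fun hat => h (hat ▸ (pth hT a b).start_mem_support)

lemma ne_of_pth_avoids_right (hT : T.IsTree) {t a b : ι} (h : t ∉ (pth hT a b).support) :
    b ≠ t := fun hbt => h (hbt ▸ (pth hT a b).end_mem_support)

lemma pth_avoids_symm (hT : T.IsTree) {t a b : ι} (h : t ∉ (pth hT a b).support) :
    t ∉ (pth hT b a).support := by
  rw [pth_eq hT (pth hT a b).reverse ((pth_isPath hT a b).reverse)]
  rwa [Walk.support_reverse, List.mem_reverse]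

lemma pth_avoids_trans (hT : T.IsTree) {t a b c : ι}
    (h1 : t ∉ (pth hT a b).support) (h2 : t ∉ (pth hT b c).support) :
    t ∉ (pth hT a c).support := by
  have ha := ne_of_pth_avoids_left hT h1
  have hb := ne_of_pth_avoids_right hT h1
  have hc := ne_of_pth_avoids_right hT h2
  exact pth_avoids_of_reach hT
    ((reach_of_pth_avoids hT h1 ha hb).trans (reach_of_pth_avoids hT h2 hb hc))

/-- `S` is path-closed: it contains the unique path between any two of its points. -/
def PC (hT : T.IsTree) (S : Set ι) : Prop :=
  ∀ a ∈ S, ∀ b ∈ S, ∀ x ∈ (pth hT a b).support, x ∈ S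

lemma PC.univ (hT : T.IsTree) : PC hT Set.univ := fun _ _ _ _ _ _ => trivial

lemma PC.inter (hT : T.IsTree) {S S' : Set ι} (h : PC hT S) (h' : PC hT S') :
    PC hT (S ∩ S') := fun a ha b hb x hx => ⟨h a ha.1 b hb.1 x hx, h' a ha.2 b hb.2 x hx⟩

lemma PC_of_connected (hT : T.IsTree) {S : Set ι} (h : (T.induce S).Connected) :
    PC hT S := by
  classical
  intro a ha b hb x hx
  obtain ⟨w⟩ := h.preconnected ⟨a, ha⟩ ⟨b, hb⟩
  have heq : pth hT a b = (w.map (SimpleGraph.Embedding.induce S).toHom).bypass :=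
    pth_eq hT _ ((w.map (SimpleGraph.Embedding.induce S).toHom).bypass_isPath)
  rw [heq] at hx
  exact mem_of_support_map_induce w x (Walk.support_bypass_subset _ hx)

end TreeBasics

section Helly

/-- Along a path ending in `Z`, there is a first vertex belonging to `Z`. -/
lemma firstHit :
    ∀ {c a : ι} (w : T.Walk c a), w.IsPath → ∀ (Z : Set ι), a ∈ Z →
      ∃ (m : ι) (q : T.Walk c m), m ∈ Z ∧ q.IsPath ∧
        (∀ x ∈ q.support, x ∈ w.support) ∧ (∀ x ∈ q.support, x ∈ Z → x = m) := by
  intro c a w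
  induction w with
  | nil =>
    intro _ Z hc
    exact ⟨_, Walk.nil, hc, Walk.IsPath.nil, by simp, by simp⟩
  | @cons c x a h w ih =>
    intro hp Z ha
    by_cases hc : c ∈ Z
    · exact ⟨c, Walk.nil, hc, Walk.IsPath.nil, by simp, by simp⟩
    · obtain ⟨m, q, hm, hq, hsub, hfirst⟩ := ih hp.of_cons Z ha
      refine ⟨m, Walk.cons h q, hm, ?_, ?_, ?_⟩
      · rw [Walk.cons_isPath_iff]
        exact ⟨hq, fun hcq => ((Walk.cons_isPath_iff h w).mp hp).2 (hsub c hcq)⟩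
      · intro y hy
        rw [Walk.support_cons, List.mem_cons] at hy
        rcases hy with rfl | hy
        · simp
        · have := hsub y hy
          simp [Walk.support_cons, this]
      · intro y hy hyZ
        rw [Walk.support_cons, List.mem_cons] at hy
        rcases hy with rfl | hy
        · exact absurd hyZ hc
        · exact hfirst y hy hyZ

lemma helly3 (hT : T.IsTree) {S1 S2 S3 : Set ι}
    (h1 : PC hT S1) (h2 : PC hT S2) (h3 : PC hT S3)
    {a b c : ι} (ha1 : a ∈ S1) (ha2 : a ∈ S2) (hb2 : b ∈ S2) (hb3 : b ∈ S3)
    (hc3 : c ∈ S3) (hc1 : c ∈ S1) :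
    ∃ m, m ∈ S1 ∧ m ∈ S2 ∧ m ∈ S3 := by
  classical
  obtain ⟨m, q, hm, hq, hsub, hfirst⟩ :=
    firstHit (pth hT c a) (pth_isPath hT c a) {x | x ∈ (pth hT a b).support}
      ((pth hT a b).start_mem_support)
  refine ⟨m, ?_, ?_, ?_⟩
  · exact h1 c hc1 a ha1 m (hsub m q.end_mem_support)
  · exact h2 a ha2 b hb2 m hm
  · -- build the unique path from c to b through m
    have hdrop : ((pth hT a b).dropUntil m hm).IsPath := (pth_isPath hT a b).dropUntil hm
    have happ : (q.append ((pth hT a b).dropUntil m hm)).IsPath := by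
      rw [Walk.isPath_def, Walk.support_append]
      have htail : ((pth hT a b).dropUntil m hm).support.tail.Nodup := by
        have h1 := hdrop.support_nodup
        rw [Walk.support_eq_cons] at h1
        exact (List.nodup_cons.mp h1).2
      refine List.Nodup.append hq.support_nodup htail ?_
      intro y hyq hyt
      have hyP : y ∈ (pth hT a b).support :=
        Walk.support_dropUntil_subset _ hm (List.mem_of_mem_tail hyt)
      have : y = m := hfirst y hyq hyP
      subst this
      exact (by
        have := hdrop.support_nodup
        have hhead : ((pth hT a b).dropUntil y hm).support =
            y :: ((pth hT a b).dropUntil y hm).support.tail := by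
          rw [← Walk.support_eq_cons]
        rw [hhead] at this
        exact (List.nodup_cons.mp this).1 hyt)
    have heq : pth hT c b = q.append ((pth hT a b).dropUntil m hm) := pth_eq hT _ happ
    have hmcb : m ∈ (pth hT c b).support := by
      rw [heq, Walk.mem_support_append_iff]
      exact Or.inl q.end_mem_support
    exact h3 c hc3 b hb3 m hmcb

lemma helly {κ : Type} [DecidableEq κ] (hT : T.IsTree) :
    ∀ (F : Finset κ), ∀ (S : κ → Set ι), F.Nonempty → (∀ i ∈ F, PC hT (S i)) →
      (∀ i ∈ F, ∀ j ∈ F, (S i ∩ S j).Nonempty) → ∃ x, ∀ i ∈ F, x ∈ S i := by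
  intro F
  induction F using Finset.strongInduction with
  | _ F ih =>
    intro S hne hPC hint
    by_cases hcard : F.card ≤ 1
    · obtain ⟨i, rfl⟩ := Finset.card_eq_one.mp (le_antisymm hcard (Finset.card_pos.mpr hne))
      obtain ⟨x, hx, -⟩ := hint i (by simp) i (by simp)
      exact ⟨x, fun j hj => by rw [Finset.mem_singleton] at hj; exact hj ▸ hx⟩
    · push_neg at hcard
      obtain ⟨i, hi, j, hj, hij⟩ := Finset.one_lt_card.mp hcard
      set S' : κ → Set ι := Function.update S i (S i ∩ S j) with hS'
      have hFi : i ∈ F.erase j := Finset.mem_erase.mpr ⟨hij, hi⟩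
      have key : ∀ k ∈ F.erase j, PC hT (S' k) := by
        intro k hk
        rcases eq_or_ne k i with rfl | hki
        · rw [hS', Function.update_self]
          exact PC.inter hT (hPC k hi) (hPC j hj)
        · rw [hS', Function.update_of_ne hki]
          exact hPC k (Finset.mem_of_mem_erase hk)
      have key2 : ∀ k ∈ F.erase j, ∀ l ∈ F.erase j, (S' k ∩ S' l).Nonempty := by
        intro k hk l hl
        have hkF := Finset.mem_of_mem_erase hk
        have hlF := Finset.mem_of_mem_erase hl
        by_cases hki : k = i <;> by_cases hli : l = i <;>
          simp only [hS', Function.update_apply, if_pos, if_neg, hki, hli, if_true, if_false]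
        · 
          obtain ⟨x, hx⟩ := hint i hi j hj
          exact ⟨x, hx, hx⟩
        · 
          obtain ⟨x, hx1, hx2⟩ := hint i hi j hj
          obtain ⟨y, hy1, hy2⟩ := hint j hj l hlF
          obtain ⟨z, hz1, hz2⟩ := hint l hlF i hi
          obtain ⟨m, hm1, hm2, hm3⟩ := helly3 hT (hPC i hi) (hPC j hj) (hPC l hlF)
            hx1 hx2 hy1 hy2 hz1 hz2
          exact ⟨m, ⟨hm1, hm2⟩, hm3⟩
        · 
          obtain ⟨x, hx1, hx2⟩ := hint i hi j hj
          obtain ⟨y, hy1, hy2⟩ := hint j hj k hkF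
          obtain ⟨z, hz1, hz2⟩ := hint k hkF i hi
          obtain ⟨m, hm1, hm2, hm3⟩ := helly3 hT (hPC i hi) (hPC j hj) (hPC k hkF)
            hx1 hx2 hy1 hy2 hz1 hz2
          exact ⟨m, hm3, hm1, hm2⟩
        · exact hint k hkF l hlF
      obtain ⟨x, hx⟩ := ih (F.erase j) (Finset.erase_ssubset hj) S' ⟨i, hFi⟩ key key2
      refine ⟨x, fun k hk => ?_⟩
      rcases eq_or_ne k j with rfl | hkj
      · have := hx i hFi
        rw [hS', Function.update_self] at this
        exact this.2
      · have hk' : k ∈ F.erase j := Finset.mem_erase.mpr ⟨hkj, hk⟩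
        have := hx k hk'
        rcases eq_or_ne k i with rfl | hki
        · rw [hS', Function.update_self] at this
          exact this.1
        · rwa [hS', Function.update_of_ne hki] at this

end Helly

section Centroid

open Finset in
/-- The centroid lemma: there is a node `t` of the tree such that every
"connected-avoiding-`t`" class of the points `pt` has size at most `n/2`. -/
lemma centroid (hT : T.IsTree) {n : ℕ} (pt : Fin n → ι) (hn : 0 < n) :
    ∃ t : ι, ∀ C : Finset (Fin n),
      (∀ v ∈ C, ∀ w ∈ C, pt v ≠ t ∧ t ∉ (pth hT (pt v) (pt w)).support) →
      2 * C.card ≤ n := by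
  classical
  set Φ : ι → ℕ := fun t => ∑ v : Fin n, (pth hT t (pt v)).length with hΦ
  have hset : {m | ∃ t, Φ t = m}.Nonempty := ⟨Φ (pt ⟨0, hn⟩), ⟨_, rfl⟩⟩
  obtain ⟨t, ht⟩ := Nat.sInf_mem hset
  refine ⟨t, fun C hall => ?_⟩
  by_contra hbig
  push_neg at hbig
  have hCne : C.Nonempty := by
    rw [← Finset.card_pos]; omega
  obtain ⟨v₀, hv₀⟩ := hCne
  have hne0 : pt v₀ ≠ t := (hall v₀ hv₀ v₀ hv₀).1
  -- the neighbour of t towards pt v₀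
  have hnotnil : ¬ (pth hT t (pt v₀)).Nil := by
    intro h
    exact (Ne.symm hne0) (Walk.Nil.eq h)
  obtain ⟨t', hadj, w', hw'⟩ : ∃ (t' : ι) (h : T.Adj t t') (w' : T.Walk t' (pt v₀)),
      pth hT t (pt v₀) = Walk.cons h w' := by
    cases hp : pth hT t (pt v₀) with
    | nil => rw [hp] at hnotnil; exact absurd Walk.Nil.nil hnotnil
    | cons h w' => exact ⟨_, h, w', rfl⟩
  have hwpath : (Walk.cons hadj w').IsPath := by rw [← hw']; exact pth_isPath hT t (pt v₀)
  have htw' : t ∉ w'.support := ((Walk.cons_isPath_iff hadj w').mp hwpath).2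
  have hw'path : w'.IsPath := ((Walk.cons_isPath_iff hadj w').mp hwpath).1
  -- the path from t' to pt v₀ avoids t
  have hkey0 : t ∉ (pth hT t' (pt v₀)).support := by
    rw [pth_eq hT w' hw'path]; exact htw'
  -- key fact for every member of the class
  have hkeylen : ∀ v ∈ C, (pth hT t (pt v)).length = (pth hT t' (pt v)).length + 1 := by
    intro v hv
    have havoid : t ∉ (pth hT t' (pt v)).support :=
      pth_avoids_trans hT hkey0 (hall v₀ hv₀ v hv).2
    have hcons : (Walk.cons hadj (pth hT t' (pt v))).IsPath :=
      (Walk.cons_isPath_iff hadj _).mpr ⟨pth_isPath hT t' (pt v), havoid⟩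
    have heq := pth_eq hT _ hcons
    rw [heq]; simp
  -- for every v the length can increase by at most one
  have hgen : ∀ v : Fin n, (pth hT t' (pt v)).length ≤ (pth hT t (pt v)).length + 1 := by
    intro v
    have : (pth hT t' (pt v)) = (Walk.cons hadj.symm (pth hT t (pt v))).bypass :=
      pth_eq hT _ (Walk.bypass_isPath _)
    rw [this]
    calc (Walk.cons hadj.symm (pth hT t (pt v))).bypass.length
        ≤ (Walk.cons hadj.symm (pth hT t (pt v))).length := Walk.length_bypass_le _
      _ = (pth hT t (pt v)).length + 1 := by simp
  -- sum comparison
  have hsum : Φ t' + 2 * C.card ≤ Φ t + n := by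
    have : ∀ v : Fin n, (pth hT t' (pt v)).length + (if v ∈ C then 2 else 0)
        ≤ (pth hT t (pt v)).length + 1 := by
      intro v
      by_cases hv : v ∈ C
      · simp only [hv, if_true]
        rw [hkeylen v hv]
      · simp only [hv, if_false]
        have := hgen v
        omega
    calc Φ t' + 2 * C.card
        = ∑ v : Fin n, ((pth hT t' (pt v)).length + (if v ∈ C then 2 else 0)) := by
          rw [Finset.sum_add_distrib, Finset.sum_ite_mem]
          simp [hΦ, Finset.univ_inter, mul_comm]
      _ ≤ ∑ v : Fin n, ((pth hT t (pt v)).length + 1) := Finset.sum_le_sum (fun v _ => this v)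
      _ = Φ t + n := by rw [Finset.sum_add_distrib]; simp [hΦ]
  have hmin : sInf {m | ∃ t, Φ t = m} ≤ Φ t' := Nat.sInf_le ⟨t', rfl⟩
  omega

end Centroid


section Pairing

variable {α : Type} [DecidableEq α]

open Finset

/-- From a finite set all of whose `r`-classes have size at most half the size of the set,
one can extract `⌊card/2⌋` disjoint pairs of non-`r`-related elements. -/
lemma pairing (r : α → α → Prop) [DecidableRel r]
    (hsymm : ∀ a b, r a b → r b a) (htrans : ∀ a b c, r a b → r b c → r a c) :
    ∀ (s : Finset α), (∀ v ∈ s, 2 * (s.filter (fun w => r v w)).card ≤ s.card) →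
    ∃ P : Finset (α × α), P.card = s.card / 2 ∧
      (∀ q ∈ P, q.1 ∈ s ∧ q.2 ∈ s ∧ ¬ r q.1 q.2 ∧ q.1 ≠ q.2) ∧
      (∀ q ∈ P, ∀ q' ∈ P, q ≠ q' →
        q.1 ≠ q'.1 ∧ q.1 ≠ q'.2 ∧ q.2 ≠ q'.1 ∧ q.2 ≠ q'.2) := by
  intro s
  induction s using Finset.strongInduction with
  | _ s ih =>
    intro hs
    -- auxiliary facts
    have hrfl : ∀ a b, r a b → r a a := fun a b h => htrans a b a h (hsymm a b h)
    by_cases h1 : s.card ≤ 1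
    · exact ⟨∅, by simp; omega, by simp, by simp⟩
    push_neg at h1
    by_cases h3 : s.card ≤ 3
    · -- find a single good pair
      have hpair : ∃ u ∈ s, ∃ v ∈ s, u ≠ v ∧ ¬ r u v := by
        by_contra hcon
        push_neg at hcon
        obtain ⟨u, hu, v, hv, huv⟩ := Finset.one_lt_card.mp h1
        have hruv : r u v := hcon u hu v hv huv
        have : {u, v} ⊆ s.filter (fun w => r u w) := by
          intro x hx
          rw [Finset.mem_insert, Finset.mem_singleton] at hx
          rcases hx with h | h
          · rw [h]; exact Finset.mem_filter.mpr ⟨hu, hrfl u v hruv⟩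
          · rw [h]; exact Finset.mem_filter.mpr ⟨hv, hruv⟩
        have h2 : 2 ≤ (s.filter (fun w => r u w)).card := by
          calc 2 = ({u, v} : Finset α).card := by rw [Finset.card_insert_of_notMem (by simp [huv]), Finset.card_singleton]
            _ ≤ _ := Finset.card_le_card this
        have := hs u hu
        omega
      obtain ⟨u, hu, v, hv, huv, hruv⟩ := hpair
      refine ⟨{(u, v)}, ?_, ?_, ?_⟩
      · simp; omega
      · simp [hu, hv, hruv, huv]
      · simp
    push_neg at h3
    -- pick u with maximal class
    obtain ⟨u, hu, humax⟩ := Finset.exists_max_image s (fun v => (s.filter (fun w => r v w)).card)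
      (Finset.card_pos.mp (by omega))
    -- candidates for the partner
    set cand : Finset α := (s.erase u).filter (fun v => ¬ r u v) with hcand
    have hcandne : cand.Nonempty := by
      rw [← Finset.card_pos, hcand]
      have hsplit : (s.erase u).card ≤ ((s.erase u).filter (fun v => ¬ r u v)).card
          + (s.filter (fun w => r u w)).card := by
        have := Finset.card_filter_add_card_filter_not
          (s := s.erase u) (p := fun v => r u v)
        have hsub : (s.erase u).filter (fun v => r u v) ⊆ s.filter (fun w => r u w) :=
          Finset.filter_subset_filter _ (Finset.erase_subset u s) |>.trans (by rfl)
        have := Finset.card_le_card hsub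
        omega
      have hcu := hs u hu
      have herase : (s.erase u).card = s.card - 1 := Finset.card_erase_of_mem hu
      omega
    obtain ⟨v, hvc, hvmax⟩ := Finset.exists_max_image cand
      (fun w => (s.filter (fun x => r w x)).card) hcandne
    rw [hcand, Finset.mem_filter, Finset.mem_erase] at hvc
    obtain ⟨⟨hvu, hv⟩, hruv⟩ := hvc
    -- the smaller set
    set s' : Finset α := (s.erase u).erase v with hs'
    have hs'card : s'.card = s.card - 2 := by
      rw [hs', Finset.card_erase_of_mem (Finset.mem_erase.mpr ⟨hvu, hv⟩),
        Finset.card_erase_of_mem hu]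
      omega
    have hs'sub : s' ⊆ s := (Finset.erase_subset _ _).trans (Finset.erase_subset _ _)
    have hus' : u ∉ s' := by
      rw [hs']
      intro h
      exact (Finset.mem_erase.mp (Finset.mem_of_mem_erase h)).1 rfl
    have hvs' : v ∉ s' := fun h => (Finset.mem_erase.mp h).1 rfl
    -- hypothesis for the smaller set
    have hyp' : ∀ w ∈ s', 2 * (s'.filter (fun x => r w x)).card ≤ s'.card := by
      intro w hw
      have hws : w ∈ s := hs'sub hw
      have hwv : w ≠ v := (Finset.mem_erase.mp hw).1
      have hwu : w ≠ u := (Finset.mem_erase.mp (Finset.mem_of_mem_erase hw)).1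
      have hfsub : s'.filter (fun x => r w x) ⊆ s.filter (fun x => r w x) :=
        Finset.filter_subset_filter _ hs'sub
      by_cases hrwu : r w u
      · have hsub2 : s'.filter (fun x => r w x) ⊆ (s.filter (fun x => r w x)).erase u := by
          intro x hx
          rw [Finset.mem_erase]
          exact ⟨(Finset.mem_erase.mp (Finset.mem_of_mem_erase (Finset.mem_filter.mp hx).1)).1,
            hfsub hx⟩
        have hcard2 := Finset.card_le_card hsub2
        rw [Finset.card_erase_of_mem
          (show u ∈ s.filter (fun x => r w x) from Finset.mem_filter.mpr ⟨hu, hrwu⟩)] at hcard2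
        have := hs w hws
        have h4 := hs'card
        omega
      by_cases hrwv : r w v
      · have hsub2 : s'.filter (fun x => r w x) ⊆ (s.filter (fun x => r w x)).erase v := by
          intro x hx
          rw [Finset.mem_erase]
          exact ⟨(Finset.mem_erase.mp (Finset.mem_filter.mp hx).1).1, hfsub hx⟩
        have hcard2 := Finset.card_le_card hsub2
        rw [Finset.card_erase_of_mem
          (show v ∈ s.filter (fun x => r w x) from Finset.mem_filter.mpr ⟨hv, hrwv⟩)] at hcard2
        have := hs w hws
        have h4 := hs'card
        omega
      -- w's class is disjoint from those of u and v
      · have hdisj : ∀ a b : α, ¬ r a b →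
            Disjoint (s.filter (fun x => r a x)) (s.filter (fun x => r b x)) := by
          intro a b hab
          rw [Finset.disjoint_left]
          intro x hxa hxb
          exact hab (htrans a x b (Finset.mem_filter.mp hxa).2
            (hsymm b x (Finset.mem_filter.mp hxb).2))
        have hruw : ¬ r u w := fun h => hrwu (hsymm u w h)
        have hrvw : ¬ r v w := fun h => hrwv (hsymm v w h)
        have hd1 : Disjoint (s.filter (fun x => r u x)) (s.filter (fun x => r v x)) :=
          hdisj u v hruv
        have hd2 : Disjoint (s.filter (fun x => r u x) ∪ s.filter (fun x => r v x))
            (s.filter (fun x => r w x)) :=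
          Finset.disjoint_union_left.mpr ⟨hdisj u w hruw, hdisj v w hrvw⟩
        have hsum : (s.filter (fun x => r u x)).card + (s.filter (fun x => r v x)).card
            + (s.filter (fun x => r w x)).card ≤ s.card := by
          rw [← Finset.card_union_of_disjoint hd1, ← Finset.card_union_of_disjoint hd2]
          exact Finset.card_le_card (by
            intro x hx
            rcases Finset.mem_union.mp hx with h | h
            · rcases Finset.mem_union.mp h with h' | h'
              · exact (Finset.mem_filter.mp h').1
              · exact (Finset.mem_filter.mp h').1
            · exact (Finset.mem_filter.mp h).1)
        -- w is a candidate, so its class is at most v's class, which is at most u's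
        have hwc : w ∈ cand := by
          rw [hcand, Finset.mem_filter, Finset.mem_erase]
          exact ⟨⟨hwu, hws⟩, hruw⟩
        have hle1 := hvmax w hwc
        have hle2 := humax v hv
        have hle3 := Finset.card_le_card hfsub
        have h4 := hs'card
        omega
    obtain ⟨P', hP'card, hP'mem, hP'disj⟩ := ih s'
      (Finset.ssubset_of_ssubset_of_subset
        (Finset.erase_ssubset (Finset.mem_erase.mpr ⟨hvu, hv⟩)) (Finset.erase_subset _ _)) hyp'
    have huvP' : (u, v) ∉ P' := fun h => hus' (hP'mem _ h).1
    refine ⟨insert (u, v) P', ?_, ?_, ?_⟩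
    · rw [Finset.card_insert_of_notMem huvP', hP'card, hs'card]
      omega
    · intro q hq
      rcases Finset.mem_insert.mp hq with h | h
      · rw [h]
        exact ⟨hu, hv, hruv, Ne.symm hvu⟩
      · obtain ⟨h1, h2, h3, h4⟩ := hP'mem q h
        exact ⟨hs'sub h1, hs'sub h2, h3, h4⟩
    · intro q hq q' hq' hqq'
      rcases Finset.mem_insert.mp hq with h | h <;>
        rcases Finset.mem_insert.mp hq' with h' | h'
      · exact absurd (h.trans h'.symm) hqq'
      · obtain ⟨h1, h2, _, _⟩ := hP'mem q' h'
        rw [h]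
        exact ⟨fun he => hus' (by rw [show u = q'.1 from he]; exact h1),
          fun he => hus' (by rw [show u = q'.2 from he]; exact h2),
          fun he => hvs' (by rw [show v = q'.1 from he]; exact h1),
          fun he => hvs' (by rw [show v = q'.2 from he]; exact h2)⟩
      · obtain ⟨h1, h2, _, _⟩ := hP'mem q h
        rw [h']
        exact ⟨fun he => hus' (by rw [show u = q.1 from he.symm]; exact h1),
          fun he => hvs' (by rw [show v = q.1 from he.symm]; exact h1),
          fun he => hus' (by rw [show u = q.2 from he.symm]; exact h2),
          fun he => hvs' (by rw [show v = q.2 from he.symm]; exact h2)⟩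
      · exact hP'disj q h q' h' hqq'

end Pairing




section LKn

variable {n : ℕ}

/-- The vertex of `L(K_n)` corresponding to the pair `x ≠ y`. -/
def evtx (x y : Fin n) (h : x ≠ y) : (⊤ : SimpleGraph (Fin n)).edgeSet :=
  ⟨s(x, y), by rw [SimpleGraph.mem_edgeSet]; exact h⟩

lemma evtx_swap (x y : Fin n) (h : x ≠ y) : evtx x y h = evtx y x h.symm :=
  Subtype.ext (Sym2.eq_swap)

lemma mem_evtx {v x y : Fin n} {h : x ≠ y} :
    v ∈ (evtx x y h : Sym2 (Fin n)) ↔ v = x ∨ v = y := Sym2.mem_iff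

/-- The set of endpoints of an edge of `K_n`. -/
def ends (e : (⊤ : SimpleGraph (Fin n)).edgeSet) : Finset (Fin n) :=
  Finset.univ.filter (· ∈ (e : Sym2 (Fin n)))

lemma ends_evtx (x y : Fin n) (h : x ≠ y) : ends (evtx x y h) = {x, y} := by
  ext v
  simp [ends, mem_evtx]

lemma card_ends (e : (⊤ : SimpleGraph (Fin n)).edgeSet) : (ends e).card = 2 := by
  obtain ⟨e, he⟩ := e
  induction e with
  | _ x y =>
    rw [SimpleGraph.mem_edgeSet, SimpleGraph.top_adj] at he
    rw [show (⟨s(x,y), _⟩ : (⊤ : SimpleGraph (Fin n)).edgeSet) = evtx x y he from rfl,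
      ends_evtx]
    rw [Finset.card_insert_of_notMem (by simp [he]), Finset.card_singleton]

lemma not_adj_iff_disjoint {e f : (⊤ : SimpleGraph (Fin n)).edgeSet} (hef : e ≠ f) :
    ¬ (⊤ : SimpleGraph (Fin n)).lineGraph.Adj e f ↔ Disjoint (ends e) (ends f) := by
  rw [lineGraph_adj_iff_exists]
  constructor
  · intro h
    rw [Finset.disjoint_left]
    intro x hx1 hx2
    rw [ends, Finset.mem_filter] at hx1 hx2
    exact h ⟨hef, x, hx1.2, hx2.2⟩
  · intro h ⟨_, x, hx1, hx2⟩
    exact Finset.disjoint_left.mp h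
      (by rw [ends, Finset.mem_filter]; exact ⟨Finset.mem_univ x, hx1⟩)
      (by rw [ends, Finset.mem_filter]; exact ⟨Finset.mem_univ x, hx2⟩)

end LKn

section LKn2

variable {n : ℕ}

lemma indep_two_mul_card_le (s : Finset ((⊤ : SimpleGraph (Fin n)).edgeSet))
    (hs : (↑s : Set ((⊤ : SimpleGraph (Fin n)).edgeSet)).Pairwise
      fun u v => ¬ (⊤ : SimpleGraph (Fin n)).lineGraph.Adj u v) :
    2 * s.card ≤ n := by
  classical
  have hdisj : ∀ e ∈ s, ∀ f ∈ s, e ≠ f → Disjoint (ends e) (ends f) := by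
    intro e he f hf hef
    exact (not_adj_iff_disjoint hef).mp (hs he hf hef)
  calc 2 * s.card = ∑ e ∈ s, (ends e).card := by
        rw [Finset.sum_congr rfl (fun e _ => card_ends e)]
        rw [Finset.sum_const, smul_eq_mul, mul_comm]
    _ = (s.biUnion ends).card := (Finset.card_biUnion hdisj).symm
    _ ≤ (Finset.univ : Finset (Fin n)).card := Finset.card_le_card (Finset.subset_univ _)
    _ = n := by simp

/-- A perfect matching (up to parity) in `K_n`, as an independent set in the line graph. -/
lemma exists_matching (n : ℕ) :
    ∃ s : Finset ((⊤ : SimpleGraph (Fin n)).edgeSet),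
      ((↑s : Set ((⊤ : SimpleGraph (Fin n)).edgeSet)).Pairwise
        fun u v => ¬ (⊤ : SimpleGraph (Fin n)).lineGraph.Adj u v) ∧ s.card = n / 2 := by
  classical
  have hb1 : ∀ i : Fin (n / 2), 2 * (i : ℕ) < n := fun i => by have := i.2; omega
  have hb2 : ∀ i : Fin (n / 2), 2 * (i : ℕ) + 1 < n := fun i => by have := i.2; omega
  set f : Fin (n / 2) → (⊤ : SimpleGraph (Fin n)).edgeSet := fun i =>
    evtx ⟨2 * i, hb1 i⟩ ⟨2 * i + 1, hb2 i⟩ (by simp [Fin.ext_iff]) with hf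
  have hends : ∀ i, ends (f i) = {(⟨2 * i, hb1 i⟩ : Fin n), ⟨2 * i + 1, hb2 i⟩} :=
    fun i => ends_evtx _ _ _
  have hinj : Function.Injective f := by
    intro i j hij
    have : ends (f i) = ends (f j) := by rw [hij]
    rw [hends, hends] at this
    have h1 : (⟨2 * i, hb1 i⟩ : Fin n) ∈ ({(⟨2 * j, hb1 j⟩ : Fin n), ⟨2 * j + 1, hb2 j⟩} : Finset (Fin n)) := by
      rw [← this]; simp
    rw [Finset.mem_insert, Finset.mem_singleton, Fin.ext_iff, Fin.ext_iff] at h1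
    simp only [Fin.val_mk] at h1
    apply Fin.ext
    omega
  refine ⟨Finset.univ.image f, ?_, ?_⟩
  · intro e he g hg heg
    simp only [Finset.coe_image, Set.mem_image] at he hg
    obtain ⟨i, -, rfl⟩ := he
    obtain ⟨j, -, rfl⟩ := hg
    have hij : i ≠ j := fun h => heg (by rw [h])
    rw [not_adj_iff_disjoint heg, hends, hends, Finset.disjoint_left]
    intro x hx1 hx2
    rw [Finset.mem_insert, Finset.mem_singleton, Fin.ext_iff, Fin.ext_iff] at hx1 hx2
    simp only [Fin.val_mk] at hx1 hx2
    have : (i : ℕ) ≠ (j : ℕ) := fun h => hij (Fin.ext h)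
    omega
  · rw [Finset.card_image_of_injective _ hinj, Finset.card_univ, Fintype.card_fin]

end LKn2

/-- For every positive integer `n`,
`tree-α(L(K_n)) = α(L(K_n)) = ⌊n/2⌋`. -/
theorem treeIndepNum_lineGraph_complete
    (n : ℕ) (hn : 0 < n) :
    treeIndepNum (SimpleGraph.lineGraph (⊤ : SimpleGraph (Fin n))) = n / 2 ∧
    indepNum (SimpleGraph.lineGraph (⊤ : SimpleGraph (Fin n))) = n / 2 := by
  classical
  set G := SimpleGraph.lineGraph (⊤ : SimpleGraph (Fin n)) with hG
  -- upper bound for independent sets in any induced subgraph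
  have hElt : ∀ (s : Set (⊤ : SimpleGraph (Fin n)).edgeSet) (m : ℕ),
      m ∈ {m | ∃ t : Finset (⊤ : SimpleGraph (Fin n)).edgeSet,
        ↑t ⊆ s ∧ IsIndepSet G ↑t ∧ t.card = m} → m ≤ n / 2 := by
    rintro s m ⟨t, -, hind, rfl⟩
    have := indep_two_mul_card_le t hind
    omega
  have hzero : ∀ (s : Set (⊤ : SimpleGraph (Fin n)).edgeSet),
      0 ∈ {m | ∃ t : Finset (⊤ : SimpleGraph (Fin n)).edgeSet,
        ↑t ⊆ s ∧ IsIndepSet G ↑t ∧ t.card = m} := by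
    intro s
    exact ⟨∅, by simp, by simp [IsIndepSet], rfl⟩
  have hBdd : ∀ (s : Set (⊤ : SimpleGraph (Fin n)).edgeSet),
      BddAbove {m | ∃ t : Finset (⊤ : SimpleGraph (Fin n)).edgeSet,
        ↑t ⊆ s ∧ IsIndepSet G ↑t ∧ t.card = m} :=
    fun s => ⟨n / 2, fun m hm => hElt s m hm⟩
  have hub : ∀ s : Set (⊤ : SimpleGraph (Fin n)).edgeSet, indepNumOn G s ≤ n / 2 :=
    fun s => csSup_le ⟨0, hzero s⟩ (hElt s)
  -- the independence number
  have hindep : indepNum G = n / 2 := by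
    refine le_antisymm (hub _) ?_
    obtain ⟨s, hs, hcard⟩ := exists_matching n
    calc n / 2 = s.card := hcard.symm
      _ ≤ _ := le_csSup (hBdd _) ⟨s, by simp, hs, rfl⟩
  -- the upper bound for the alpha of any tree decomposition
  have halphaub : ∀ D : TreeDecomp G, D.alpha ≤ n / 2 := by
    intro D
    rcases Set.eq_empty_or_nonempty {m | ∃ t : D.ι, m = indepNumOn G (D.bag t)} with he | hne
    · show sSup _ ≤ _
      rw [he]; rw [show sSup (∅ : Set ℕ) = 0 from by simp]
      exact Nat.zero_le _
    · exact csSup_le hne (by rintro m ⟨t, rfl⟩; exact hub _)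
  -- the lower bound for the alpha of any tree decomposition
  have halphalb : ∀ D : TreeDecomp G, n / 2 ≤ D.alpha := by
    intro D
    rcases Nat.lt_or_ge n 2 with hn2 | hn2
    · have : n / 2 = 0 := by omega
      rw [this]
      exact Nat.zero_le _
    -- now n ≥ 2
    have hex : ∀ v : Fin n, ∃ u : Fin n, u ≠ v :=
      fun v => Fintype.exists_ne_of_one_lt_card (by simp; omega) v
    -- Helly points: for each vertex v of K_n, a bag containing all edges at v
    have hpt : ∀ v : Fin n, ∃ x : D.ι, ∀ (w : Fin n) (h : v ≠ w), evtx v w h ∈ D.bag x := by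
      intro v
      set S : Fin n → Set D.ι := fun w =>
        if h : v = w then Set.univ else {x | evtx v w h ∈ D.bag x} with hS
      have hPC : ∀ w ∈ (Finset.univ : Finset (Fin n)), PC D.isTree (S w) := by
        intro w _
        rw [hS]
        by_cases h : v = w
        · simp only [dif_pos h]; exact PC.univ _
        · simp only [dif_neg h]; exact PC_of_connected _ (D.bag_conn _)
      have hint : ∀ w ∈ (Finset.univ : Finset (Fin n)), ∀ w' ∈ (Finset.univ : Finset (Fin n)),
          (S w ∩ S w').Nonempty := by
        intro w _ w' _
        have hgen : ∀ w'' : Fin n, (S w'').Nonempty := by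
          intro w''
          rw [hS]
          by_cases h : v = w''
          · simp only [dif_pos h]; exact ⟨(D.bag_vert (evtx v _ (Ne.symm (hex v).choose_spec))).choose, trivial⟩
          · simp only [dif_neg h]; exact D.bag_vert (evtx v w'' h)
        rw [hS]
        by_cases h : v = w <;> by_cases h' : v = w'
        · simp only [dif_pos h, dif_pos h', Set.univ_inter]
          exact hgen w' |>.imp (by rw [hS]; simp only [dif_pos h']; tauto)
        · simp only [dif_pos h, Set.univ_inter, dif_neg h']
          exact D.bag_vert (evtx v w' h')
        · simp only [dif_neg h, dif_pos h', Set.inter_univ]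
          exact D.bag_vert (evtx v w h)
        · simp only [dif_neg h, dif_neg h']
          by_cases hww' : w = w'
          · subst hww'
            obtain ⟨x, hx⟩ := D.bag_vert (evtx v w h)
            exact ⟨x, hx, hx⟩
          · have hadj : G.Adj (evtx v w h) (evtx v w' h') := by
              rw [hG, lineGraph_adj_iff_exists]
              refine ⟨?_, v, by rw [mem_evtx]; left; rfl, by rw [mem_evtx]; left; rfl⟩
              intro hcon
              rw [Subtype.ext_iff] at hcon
              simp only [evtx] at hcon
              rw [Sym2.eq_iff] at hcon
              rcases hcon with ⟨-, h2⟩ | ⟨h1, -⟩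
              · exact hww' h2
              · exact h' h1
            obtain ⟨x, hx1, hx2⟩ := D.bag_edge hadj
            exact ⟨x, hx1, hx2⟩
      obtain ⟨x, hx⟩ := helly D.isTree Finset.univ S ⟨v, Finset.mem_univ v⟩ hPC hint
      refine ⟨x, fun w h => ?_⟩
      have := hx w (Finset.mem_univ w)
      rw [hS] at this
      simp only [dif_neg h] at this
      exact this
    choose pt hpt using hpt
    -- the centroid
    obtain ⟨t, hcent⟩ := centroid D.isTree pt (by omega)
    -- the bad relation
    set r : Fin n → Fin n → Prop := fun u w =>
      pt u ≠ t ∧ pt w ≠ t ∧ t ∉ (pth D.isTree (pt u) (pt w)).support with hr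
    haveI : DecidableRel r := Classical.decRel r
    have hsymm : ∀ a b, r a b → r b a :=
      fun a b ⟨h1, h2, h3⟩ => ⟨h2, h1, pth_avoids_symm _ h3⟩
    have htrans : ∀ a b c, r a b → r b c → r a c :=
      fun a b c ⟨h1, h2, h3⟩ ⟨h4, h5, h6⟩ => ⟨h1, h5, pth_avoids_trans _ h3 h6⟩
    obtain ⟨P, hPcard, hPmem, hPdisj⟩ := pairing r hsymm htrans Finset.univ (by
      intro v _
      have h2 : ∀ a ∈ Finset.univ.filter (fun w => r v w),
          ∀ b ∈ Finset.univ.filter (fun w => r v w),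
          pt a ≠ t ∧ t ∉ (pth D.isTree (pt a) (pt b)).support := by
        intro a ha b hb
        rw [Finset.mem_filter] at ha hb
        have hab : r a b := htrans a v b (hsymm v a ha.2) hb.2
        exact ⟨hab.1, hab.2.2⟩
      have := hcent _ h2
      simpa using this)
    -- edges of the pairs are in the bag of t
    have hedge : ∀ q ∈ P, ∀ (h : q.1 ≠ q.2), evtx q.1 q.2 h ∈ D.bag t := by
      intro q hq h
      have hnr : ¬ r q.1 q.2 := (hPmem q hq).2.2.1
      by_cases h1 : pt q.1 = t
      · have := hpt q.1 q.2 h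
        rwa [h1] at this
      by_cases h2 : pt q.2 = t
      · have := hpt q.2 q.1 (Ne.symm h)
        rw [evtx_swap q.2 q.1 (Ne.symm h)] at this
        rwa [h2] at this
      · have h3 : t ∈ (pth D.isTree (pt q.1) (pt q.2)).support := by
          by_contra hcon
          exact hnr ⟨h1, h2, hcon⟩
        have hPCe := PC_of_connected D.isTree (D.bag_conn (evtx q.1 q.2 h))
        have ha : pt q.1 ∈ {x : D.ι | evtx q.1 q.2 h ∈ D.bag x} := hpt q.1 q.2 h
        have hb : pt q.2 ∈ {x : D.ι | evtx q.1 q.2 h ∈ D.bag x} := by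
          have := hpt q.2 q.1 (Ne.symm h)
          rw [evtx_swap q.2 q.1 (Ne.symm h)] at this
          exact this
        exact hPCe (pt q.1) ha (pt q.2) hb t h3
    -- the independent set inside the bag of t
    set ts : Finset (⊤ : SimpleGraph (Fin n)).edgeSet :=
      P.attach.image (fun q => evtx q.1.1 q.1.2 (hPmem q.1 q.2).2.2.2) with hts
    have hts_sub : (↑ts : Set (⊤ : SimpleGraph (Fin n)).edgeSet) ⊆ D.bag t := by
      intro e he
      rw [hts] at he
      simp only [Finset.coe_image, Set.mem_image] at he
      obtain ⟨⟨q, hq⟩, -, rfl⟩ := he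
      exact hedge q hq _
    have hts_coords : ∀ q ∈ P, ∀ q' ∈ P, ∀ (h : q.1 ≠ q.2) (h' : q'.1 ≠ q'.2),
        evtx q.1 q.2 h = evtx q'.1 q'.2 h' → q = q' := by
      intro q hq q' hq' h h' heq
      by_contra hne
      obtain ⟨d1, d2, d3, d4⟩ := hPdisj q hq q' hq' hne
      rw [Subtype.ext_iff] at heq
      simp only [evtx] at heq
      rw [Sym2.eq_iff] at heq
      rcases heq with ⟨e1, e2⟩ | ⟨e1, e2⟩
      · exact d1 e1
      · exact d2 e1
    have hts_indep : IsIndepSet G (↑ts : Set (⊤ : SimpleGraph (Fin n)).edgeSet) := by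
      intro e he f hf hef
      rw [hts] at he hf
      simp only [Finset.coe_image, Set.mem_image] at he hf
      obtain ⟨⟨q, hq⟩, -, rfl⟩ := he
      obtain ⟨⟨q', hq'⟩, -, rfl⟩ := hf
      rw [hG, lineGraph_adj_iff_exists]
      rintro ⟨-, x, hx1, hx2⟩
      rw [mem_evtx] at hx1 hx2
      have hqq' : q ≠ q' := by
        intro hcon
        apply hef
        subst hcon
        rfl
      obtain ⟨d1, d2, d3, d4⟩ := hPdisj q hq q' hq' hqq'
      rcases hx1 with rfl | rfl <;> rcases hx2 with h' | h'
      · exact d1 h'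
      · exact d2 h'
      · exact d3 h'
      · exact d4 h'
    have hts_card : ts.card = n / 2 := by
      rw [hts]
      rw [Finset.card_image_of_injOn]
      · rw [Finset.card_attach, hPcard, Finset.card_univ, Fintype.card_fin]
      · intro q hq q' hq' heq
        exact Subtype.ext (hts_coords q.1 q.2 q'.1 q'.2 _ _ heq)
    have hstep : n / 2 ≤ indepNumOn G (D.bag t) :=
      le_csSup (hBdd _) ⟨ts, hts_sub, hts_indep, hts_card⟩
    have hstep2 : indepNumOn G (D.bag t) ≤ D.alpha :=
      le_csSup ⟨n / 2, by rintro m ⟨x, rfl⟩; exact hub _⟩ ⟨t, rfl⟩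
    exact hstep.trans hstep2
  -- the trivial tree decomposition
  have hconn : (⊥ : SimpleGraph Unit).Connected := by
    rw [SimpleGraph.connected_iff]
    exact ⟨fun u v => by cases u; cases v; exact SimpleGraph.Reachable.refl _, ⟨()⟩⟩
  have Dtriv : TreeDecomp G :=
    { ι := Unit
      tree := ⊥
      isTree := ⟨hconn, SimpleGraph.isAcyclic_bot⟩
      bag := fun _ => Set.univ
      bag_vert := fun v => ⟨(), trivial⟩
      bag_edge := fun u v _ => ⟨(), trivial, trivial⟩
      bag_conn := fun v => by
        rw [SimpleGraph.connected_iff]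
        refine ⟨fun a b => ?_, ⟨⟨(), trivial⟩⟩⟩
        have : a = b := by
          obtain ⟨⟨⟩, ha⟩ := a
          obtain ⟨⟨⟩, hb⟩ := b
          rfl
        rw [this] }
  refine ⟨le_antisymm ?_ ?_, hindep⟩
  · exact Nat.sInf_le ⟨Dtriv, le_antisymm (halphaub Dtriv) (halphalb Dtriv)⟩
  · exact le_csInf ⟨Dtriv.alpha, Dtriv, rfl⟩ (by rintro m ⟨D, rfl⟩; exact halphalb D)

end PaperTIN
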